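/- Let C(m) := binom(m, ⌊m/2⌋) denote the central binomial coefficient and define f(n,t) := [ (t+1)·C(n−t) + Σ_{ℓ=t+1}^{n} ( ℓ·log₂(ℓ)·C(n−ℓ) + 2·C(n−ℓ) ) ] / C(n). Then f(n,5) < 1 for all integers n ≥ 100. -/

import Mathlib

/-- The central binomial coefficient `C(m) = binom(m, ⌊m/2⌋)`, as a real number. -/
noncomputable def centralBinom (m : ℕ) : ℝ := (Nat.choose m (m / 2) : ℝ)

/-- The quantity `f(n,t)` from Lemma `kozep`. -/
noncomputable def fQuot (n t : ℕ) : ℝ :=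
  (((t : ℝ) + 1) * centralBinom (n - t) +
      ∑ ℓ ∈ Finset.Icc (t + 1) n,
        ((ℓ : ℝ) * Real.logb 2 ℓ * centralBinom (n - ℓ) + 2 * centralBinom (n - ℓ))) /
    centralBinom n

/- ---------- Nat lemmas ---------- -/

lemma step_lemma (m : ℕ) :
    2 * Nat.choose m (m / 2) * (m + 1) ≤ Nat.choose (m + 1) ((m + 1) / 2) * (m + 2) := by
  rcases Nat.even_or_odd m with ⟨k, hk⟩ | ⟨k, hk⟩
  · subst hk
    have e1 : (k + k) / 2 = k := by omega
    have e2 : (k + k + 1) / 2 = k := by omega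
    rw [e1, e2]
    have h1 : (k + k).succ * (k + k).choose k = (k + k).succ.choose k.succ * k.succ :=
      Nat.add_one_mul_choose_eq (k + k) k
    have h2 : (k + k + 1).choose (k + 1) = (k + k + 1).choose k := by
      have := Nat.choose_symm (n := k + k + 1) (k := k + 1) (by omega)
      simpa [show k + k + 1 - (k + 1) = k by omega] using this.symm
    simp only [Nat.succ_eq_add_one] at h1
    rw [h2] at h1
    nlinarith [h1]
  · subst hk
    have e1 : (2 * k + 1) / 2 = k := by omega
    have e2 : (2 * k + 1 + 1) / 2 = k + 1 := by omega
    rw [e1, e2]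
    have h2 : (2 * k + 1).choose (k + 1) = (2 * k + 1).choose k := by
      have := Nat.choose_symm (n := 2 * k + 1) (k := k + 1) (by omega)
      simpa [show 2 * k + 1 - (k + 1) = k by omega] using this.symm
    have h3 : (2 * k + 1 + 1).choose (k + 1) = 2 * (2 * k + 1).choose k := by
      have h := Nat.choose_succ_succ (2 * k + 1) k
      simp only [Nat.succ_eq_add_one] at h
      rw [h, h2]; ring
    rw [h3]
    nlinarith [Nat.choose_pos (show k ≤ 2*k+1 by omega)]

lemma iter_lemma (ℓ n : ℕ) (h : ℓ ≤ n) :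
    Nat.choose (n - ℓ) ((n - ℓ) / 2) * ((n - ℓ + 1) * 2 ^ ℓ) ≤
      Nat.choose n (n / 2) * (n + 1) := by
  induction ℓ with
  | zero => simp
  | succ l ih =>
    have hl : l ≤ n := by omega
    have hm : n - (l + 1) + 1 = n - l := by omega
    calc Nat.choose (n - (l+1)) ((n - (l+1)) / 2) * ((n - (l+1) + 1) * 2 ^ (l+1))
        = (2 * Nat.choose (n - (l+1)) ((n - (l+1)) / 2) * (n - (l+1) + 1)) * 2 ^ l := by ring
      _ ≤ (Nat.choose (n - (l+1) + 1) ((n - (l+1) + 1) / 2) * (n - (l+1) + 2)) * 2 ^ l := by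
          exact Nat.mul_le_mul_right _ (step_lemma _)
      _ = Nat.choose (n - l) ((n - l) / 2) * ((n - l + 1) * 2 ^ l) := by
          have hm2 : n - (l + 1) + 2 = n - l + 1 := by omega
          rw [hm, hm2]; ring
      _ ≤ Nat.choose n (n / 2) * (n + 1) := ih hl

lemma poly_le_exp (M : ℕ) (hM : 50 ≤ M) : 16000 * (M + 1) ^ 3 ≤ 2 ^ M := by
  induction M, hM using Nat.le_induction with
  | base => norm_num
  | succ m hm ih =>
    have hm3 : 50 * m ^ 2 ≤ m ^ 3 := by nlinarith [hm]
    calc 16000 * (m + 1 + 1) ^ 3 ≤ 2 * (16000 * (m+1)^3) := by nlinarith [hm3, hm]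
      _ ≤ 2 * 2 ^ m := by omega
      _ = 2 ^ (m + 1) := by ring

lemma sq_le_exp (l : ℕ) (hl : 24 ≤ l) : l ^ 2 * 2 ^ l ≤ 3 ^ l := by
  induction l, hl using Nat.le_induction with
  | base => norm_num
  | succ m hm ih =>
    have h1 : 2 * (m + 1) ^ 2 ≤ 3 * m ^ 2 := by nlinarith
    calc (m+1)^2 * 2^(m+1) = 2 * (m+1)^2 * 2^m := by ring
      _ ≤ 3 * m^2 * 2^m := Nat.mul_le_mul_right _ h1
      _ = 3 * (m^2 * 2^m) := by ring
      _ ≤ 3 * 3^m := by omega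
      _ = 3^(m+1) := by ring

/- ---------- Real versions ---------- -/

lemma cB_nonneg (m : ℕ) : 0 ≤ centralBinom m := by unfold centralBinom; positivity

lemma cB_pos (m : ℕ) : 0 < centralBinom m := by
  have := Nat.choose_pos (Nat.div_le_self m 2)
  unfold centralBinom
  exact_mod_cast this

lemma ratio_real (ℓ n : ℕ) (h : ℓ ≤ n) :
    centralBinom (n - ℓ) * ((((n:ℝ)) - ℓ + 1) * 2 ^ ℓ) ≤ centralBinom n * ((n:ℝ) + 1) := by
  have := iter_lemma ℓ n h
  have hc : ((n - ℓ : ℕ) : ℝ) = (n : ℝ) - ℓ := by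
    push_cast [Nat.cast_sub h]; ring
  calc centralBinom (n - ℓ) * (((n:ℝ) - ℓ + 1) * 2 ^ ℓ)
      = ((Nat.choose (n - ℓ) ((n - ℓ) / 2) * ((n - ℓ + 1) * 2 ^ ℓ) : ℕ) : ℝ) := by
        push_cast [centralBinom, hc]; ring
    _ ≤ ((Nat.choose n (n / 2) * (n + 1) : ℕ) : ℝ) := by exact_mod_cast this
    _ = centralBinom n * ((n:ℝ) + 1) := by push_cast [centralBinom]; ring

lemma cB_le (ℓ n : ℕ) (h : ℓ ≤ n) (K : ℝ)
    (hK : (n:ℝ) + 1 ≤ K * ((n:ℝ) - ℓ + 1)) :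
    centralBinom (n - ℓ) ≤ K * (1/2) ^ ℓ * centralBinom n := by
  have h1 := ratio_real ℓ n h
  have hln : (ℓ:ℝ) ≤ n := by exact_mod_cast h
  have hden : (0:ℝ) < ((n:ℝ) - ℓ + 1) * 2 ^ ℓ := by
    have h2 : (0:ℝ) < (n:ℝ) - ℓ + 1 := by linarith
    positivity
  rw [← sub_nonneg]
  have key : centralBinom (n - ℓ) * (((n:ℝ) - ℓ + 1) * 2 ^ ℓ) ≤
      (K * (1/2) ^ ℓ * centralBinom n) * (((n:ℝ) - ℓ + 1) * 2 ^ ℓ) := by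
    calc centralBinom (n - ℓ) * (((n:ℝ) - ℓ + 1) * 2 ^ ℓ)
        ≤ centralBinom n * ((n:ℝ) + 1) := h1
      _ ≤ centralBinom n * (K * ((n:ℝ) - ℓ + 1)) :=
          mul_le_mul_of_nonneg_left hK (cB_nonneg n)
      _ = (K * (1/2) ^ ℓ * centralBinom n) * (((n:ℝ) - ℓ + 1) * 2 ^ ℓ) := by
          have h2 : ((1:ℝ)/2)^ℓ * 2^ℓ = 1 := by rw [← mul_pow]; norm_num
          linear_combination (-(K * centralBinom n * ((n:ℝ) - ℓ + 1))) * h2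
  nlinarith [mul_le_mul_of_nonneg_right key (le_of_lt (inv_pos.mpr hden)), hden]

/- ---------- logb lemmas ---------- -/

lemma logb_le_of_pow (l p q : ℕ) (hq : 0 < q) (hl : 1 ≤ l) (h : l ^ q ≤ 2 ^ p) :
    Real.logb 2 l ≤ (p : ℝ) / q := by
  have h1 : ((l : ℝ)) ^ q ≤ (2 : ℝ) ^ p := by exact_mod_cast h
  have hlpos : (0:ℝ) < l := by exact_mod_cast hl
  have h2 : Real.logb 2 ((l:ℝ) ^ q) ≤ Real.logb 2 ((2:ℝ) ^ p) :=
    Real.logb_le_logb_of_le one_lt_two (by positivity) h1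
  rw [Real.logb_pow, Real.logb_pow, Real.logb_self_eq_one one_lt_two, mul_one] at h2
  rw [div_eq_inv_mul, ← ge_iff_le, ge_iff_le, le_inv_mul_iff₀ (by exact_mod_cast hq)]
  linarith

lemma logb_le_two_mul (l : ℕ) (hl : 1 ≤ l) : Real.logb 2 l ≤ 2 * l := by
  have hlpos : (0:ℝ) < l := by exact_mod_cast hl
  have h1 : Real.log l ≤ (l:ℝ) - 1 := Real.log_le_sub_one_of_pos hlpos
  have h2 : (0:ℝ) ≤ Real.log l := Real.log_nonneg (by exact_mod_cast hl)
  have h3 : (1/2 : ℝ) ≤ Real.log 2 := by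
    have := Real.log_two_gt_d9; linarith
  have heq : Real.logb 2 l = Real.log l / Real.log 2 := rfl
  rw [heq]
  have h4 : Real.log l / Real.log 2 ≤ Real.log l / (1/2) :=
    div_le_div_of_nonneg_left h2 (by norm_num) h3
  have h5 : Real.log l / (1/2) = 2 * Real.log l := by ring
  nlinarith

noncomputable def Lb : ℕ → ℝ
  | 6 => 13/5
  | 7 => 17/6
  | 8 => 3
  | 9 => 16/5
  | 10 => 10/3
  | 11 => 7/2
  | 12 => 18/5
  | 13 => 15/4
  | 14 => 23/6
  | _ => 5

lemma logb_le_Lb (l : ℕ) (h6 : 6 ≤ l) (h23 : l ≤ 23) : Real.logb 2 l ≤ Lb l := by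
  interval_cases l
  · exact le_trans (logb_le_of_pow 6 13 5 (by norm_num) (by norm_num) (by norm_num)) (by norm_num [Lb])
  · exact le_trans (logb_le_of_pow 7 17 6 (by norm_num) (by norm_num) (by norm_num)) (by norm_num [Lb])
  · exact le_trans (logb_le_of_pow 8 3 1 (by norm_num) (by norm_num) (by norm_num)) (by norm_num [Lb])
  · exact le_trans (logb_le_of_pow 9 16 5 (by norm_num) (by norm_num) (by norm_num)) (by norm_num [Lb])
  · exact le_trans (logb_le_of_pow 10 10 3 (by norm_num) (by norm_num) (by norm_num)) (by norm_num [Lb])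
  · exact le_trans (logb_le_of_pow 11 7 2 (by norm_num) (by norm_num) (by norm_num)) (by norm_num [Lb])
  · exact le_trans (logb_le_of_pow 12 18 5 (by norm_num) (by norm_num) (by norm_num)) (by norm_num [Lb])
  · exact le_trans (logb_le_of_pow 13 15 4 (by norm_num) (by norm_num) (by norm_num)) (by norm_num [Lb])
  · exact le_trans (logb_le_of_pow 14 23 6 (by norm_num) (by norm_num) (by norm_num)) (by norm_num [Lb])
  · exact le_trans (logb_le_of_pow 15 5 1 (by norm_num) (by norm_num) (by norm_num)) (by norm_num [Lb])
  · exact le_trans (logb_le_of_pow 16 5 1 (by norm_num) (by norm_num) (by norm_num)) (by norm_num [Lb])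
  · exact le_trans (logb_le_of_pow 17 5 1 (by norm_num) (by norm_num) (by norm_num)) (by norm_num [Lb])
  · exact le_trans (logb_le_of_pow 18 5 1 (by norm_num) (by norm_num) (by norm_num)) (by norm_num [Lb])
  · exact le_trans (logb_le_of_pow 19 5 1 (by norm_num) (by norm_num) (by norm_num)) (by norm_num [Lb])
  · exact le_trans (logb_le_of_pow 20 5 1 (by norm_num) (by norm_num) (by norm_num)) (by norm_num [Lb])
  · exact le_trans (logb_le_of_pow 21 5 1 (by norm_num) (by norm_num) (by norm_num)) (by norm_num [Lb])
  · exact le_trans (logb_le_of_pow 22 5 1 (by norm_num) (by norm_num) (by norm_num)) (by norm_num [Lb])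
  · exact le_trans (logb_le_of_pow 23 5 1 (by norm_num) (by norm_num) (by norm_num)) (by norm_num [Lb])

/- ---------- geometric sum ---------- -/

lemma geom_Ioc_le (r : ℝ) (hr0 : 0 ≤ r) (hr1 : r < 1) (a b : ℕ) (hab : a ≤ b) :
    ∑ ℓ ∈ Finset.Ioc a b, r ^ ℓ ≤ r ^ (a + 1) / (1 - r) := by
  have hIoc : Finset.Ioc a b = Finset.Ico (a+1) (b+1) := by
    rw [Finset.Ico_add_one_right_eq_Icc, Finset.Icc_add_one_left_eq_Ioc]
  rw [hIoc, geom_sum_Ico (by linarith) (by omega)]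
  have h1 : (0:ℝ) ≤ r ^ (b+1) := by positivity
  have hne : r - 1 ≠ 0 := by intro hc; nlinarith
  have hne2 : 1 - r ≠ 0 := by intro hc; nlinarith
  have key : (r^(b+1) - r^(a+1))/(r-1) = (r^(a+1) - r^(b+1))/(1-r) := by
    field_simp
    ring
  rw [key]
  have h2 : r ^ (a+1) - r^(b+1) ≤ r^(a+1) := by linarith
  have h3 : (0:ℝ) ≤ 1 - r := by linarith
  gcongr

/- ---------- explicit sum ---------- -/

noncomputable def ub (ℓ : ℕ) : ℝ := ((ℓ:ℝ) * Lb ℓ + 2) * (101 / ((101 - (ℓ:ℝ)) * 2^ℓ))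

lemma ub_sum : (∑ ℓ ∈ Finset.Ioc (5:ℕ) 23, ub ℓ) ≤ 0.742 := by
  have h : Finset.Ioc (5:ℕ) 23 = Finset.Ico 6 24 := by
    show Finset.Ioc 5 23 = Finset.Ico (5+1) (23+1)
    rw [Finset.Ico_add_one_right_eq_Icc, Finset.Icc_add_one_left_eq_Ioc]
  rw [h, Finset.sum_Ico_eq_sum_range]
  norm_num [Finset.sum_range_succ, ub, Lb]

set_option maxHeartbeats 1000000 in
/-- `f(n,5) < 1` for all `n ≥ 100`. -/
theorem stmt_7 (n : ℕ) (hn : 100 ≤ n) : fQuot n 5 < 1 := by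
  have hCn := cB_pos n
  set M := n / 2 with hMdef
  have hM50 : 50 ≤ M := by omega
  have hMn : M ≤ n := by omega
  have h23M : 23 ≤ M := by omega
  have hreal_n : (100:ℝ) ≤ n := by exact_mod_cast hn
  rw [fQuot, div_lt_one hCn]
  have hIcc : Finset.Icc (5 + 1) n = Finset.Ioc 5 n := by rw [Finset.Icc_add_one_left_eq_Ioc]
  rw [hIcc]
  rw [← Finset.sum_Ioc_consecutive _ (show 5 ≤ M by omega) hMn]
  rw [← Finset.sum_Ioc_consecutive _ (show (5:ℕ) ≤ 23 by norm_num) h23M]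
  -- head term
  have hHead : centralBinom (n - 5) ≤ (101/96) * (1/2)^5 * centralBinom n := by
    apply cB_le 5 n (by omega)
    linarith
  have hHead' : ((5:ℕ):ℝ) * centralBinom (n - 5) + centralBinom (n-5) ≤ 0.1973 * centralBinom n := by
    have h6 : (6:ℝ) * centralBinom (n - 5) ≤ 6 * ((101/96) * (1/2)^5 * centralBinom n) := by
      linarith [hHead]
    have : (6:ℝ) * ((101/96) * (1/2)^5 * centralBinom n) ≤ 0.1973 * centralBinom n := by
      nlinarith [cB_nonneg n]
    push_cast
    linarith
  -- block 1
  have hB1 : (∑ ℓ ∈ Finset.Ioc (5:ℕ) 23,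
      ((ℓ : ℝ) * Real.logb 2 ℓ * centralBinom (n - ℓ) + 2 * centralBinom (n - ℓ)))
      ≤ 0.742 * centralBinom n := by
    have step : (∑ ℓ ∈ Finset.Ioc (5:ℕ) 23,
        ((ℓ : ℝ) * Real.logb 2 ℓ * centralBinom (n - ℓ) + 2 * centralBinom (n - ℓ)))
        ≤ ∑ ℓ ∈ Finset.Ioc (5:ℕ) 23, ub ℓ * centralBinom n := by
      apply Finset.sum_le_sum
      intro ℓ hℓ
      rw [Finset.mem_Ioc] at hℓ
      obtain ⟨h6, h23⟩ := hℓ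
      have h6' : 6 ≤ ℓ := h6
      have hlog := logb_le_Lb ℓ h6' h23
      have hl1 : (1:ℝ) ≤ ℓ := by exact_mod_cast Nat.one_le_of_lt h6
      have hlognn : 0 ≤ Real.logb 2 (ℓ:ℝ) := Real.logb_nonneg one_lt_two hl1
      have hlr6 : (6:ℝ) ≤ ℓ := by exact_mod_cast h6'
      have hlr23 : (ℓ:ℝ) ≤ 23 := by exact_mod_cast h23
      have hKpos : (0:ℝ) < 101 - (ℓ:ℝ) := by linarith
      have h2pow : (0:ℝ) < 2 ^ ℓ := by positivity
      have hcB : centralBinom (n - ℓ) ≤ (101/(101 - (ℓ:ℝ))) * (1/2)^ℓ * centralBinom n := by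
        apply cB_le ℓ n (by omega)
        rw [div_mul_eq_mul_div, le_div_iff₀ hKpos]
        nlinarith
      have hterm : (ℓ:ℝ) * Real.logb 2 ℓ * centralBinom (n-ℓ) + 2 * centralBinom (n-ℓ)
          = ((ℓ:ℝ) * Real.logb 2 ℓ + 2) * centralBinom (n-ℓ) := by ring
      rw [hterm]
      have hc1 : (ℓ:ℝ) * Real.logb 2 ℓ + 2 ≤ (ℓ:ℝ) * Lb ℓ + 2 := by
        have : (ℓ:ℝ) * Real.logb 2 ℓ ≤ (ℓ:ℝ) * Lb ℓ :=
          mul_le_mul_of_nonneg_left hlog (by positivity)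
        linarith
      have hc0 : 0 ≤ (ℓ:ℝ) * Real.logb 2 ℓ + 2 := by
        have := mul_nonneg (show (0:ℝ) ≤ ℓ by positivity) hlognn
        linarith
      calc ((ℓ:ℝ) * Real.logb 2 ℓ + 2) * centralBinom (n-ℓ)
          ≤ ((ℓ:ℝ) * Lb ℓ + 2) * ((101/(101 - (ℓ:ℝ))) * (1/2)^ℓ * centralBinom n) :=
            mul_le_mul hc1 hcB (cB_nonneg _) (by linarith)
        _ = ub ℓ * centralBinom n := by
            have h2 : ((1:ℝ)/2)^ℓ * 2^ℓ = 1 := by rw [← mul_pow]; norm_num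
            unfold ub
            field_simp
            linear_combination ((ℓ:ℝ) * Lb ℓ + 2) * h2
    calc (∑ ℓ ∈ Finset.Ioc (5:ℕ) 23,
        ((ℓ : ℝ) * Real.logb 2 ℓ * centralBinom (n - ℓ) + 2 * centralBinom (n - ℓ)))
        ≤ ∑ ℓ ∈ Finset.Ioc (5:ℕ) 23, ub ℓ * centralBinom n := step
      _ = (∑ ℓ ∈ Finset.Ioc (5:ℕ) 23, ub ℓ) * centralBinom n := (Finset.sum_mul _ _ _).symm
      _ ≤ 0.742 * centralBinom n := mul_le_mul_of_nonneg_right ub_sum (cB_nonneg n)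
  -- block 2 (middle)
  have hB2 : (∑ ℓ ∈ Finset.Ioc 23 M,
      ((ℓ : ℝ) * Real.logb 2 ℓ * centralBinom (n - ℓ) + 2 * centralBinom (n - ℓ)))
      ≤ 0.0161 * centralBinom n := by
    have step : (∑ ℓ ∈ Finset.Ioc 23 M,
        ((ℓ : ℝ) * Real.logb 2 ℓ * centralBinom (n - ℓ) + 2 * centralBinom (n - ℓ)))
        ≤ ∑ ℓ ∈ Finset.Ioc 23 M, (4*(3/4:ℝ)^ℓ + 4*(1/2:ℝ)^ℓ) * centralBinom n := by
      apply Finset.sum_le_sum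
      intro ℓ hℓ
      rw [Finset.mem_Ioc] at hℓ
      obtain ⟨h24, hM'⟩ := hℓ
      have hln : ℓ ≤ n := by omega
      have hl1 : 1 ≤ ℓ := by omega
      have hlr : (24:ℝ) ≤ ℓ := by exact_mod_cast (by omega : 24 ≤ ℓ)
      have hlog2 := logb_le_two_mul ℓ hl1
      have hlognn : 0 ≤ Real.logb 2 (ℓ:ℝ) :=
        Real.logb_nonneg one_lt_two (by exact_mod_cast hl1)
      have h2l : 2 * ℓ ≤ n := by omega
      have h2lr : 2 * (ℓ:ℝ) ≤ n := by exact_mod_cast h2l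
      have hcB : centralBinom (n - ℓ) ≤ 2 * (1/2)^ℓ * centralBinom n := by
        apply cB_le ℓ n hln
        linarith
      have hterm : (ℓ:ℝ) * Real.logb 2 ℓ * centralBinom (n-ℓ) + 2 * centralBinom (n-ℓ)
          = ((ℓ:ℝ) * Real.logb 2 ℓ + 2) * centralBinom (n-ℓ) := by ring
      rw [hterm]
      have hc1 : (ℓ:ℝ) * Real.logb 2 ℓ + 2 ≤ 2*(ℓ:ℝ)^2 + 2 := by
        have : (ℓ:ℝ) * Real.logb 2 ℓ ≤ (ℓ:ℝ) * (2*ℓ) :=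
          mul_le_mul_of_nonneg_left hlog2 (by positivity)
        nlinarith
      have hc0 : 0 ≤ (ℓ:ℝ) * Real.logb 2 ℓ + 2 := by
        have := mul_nonneg (show (0:ℝ) ≤ ℓ by positivity) hlognn
        linarith
      have hsq : (ℓ:ℝ)^2 * (1/2)^ℓ ≤ (3/4:ℝ)^ℓ := by
        have hnat := sq_le_exp ℓ (by omega)
        have hr : ((ℓ:ℝ))^2 * 2^ℓ ≤ 3^ℓ := by exact_mod_cast hnat
        have e2 : ((3:ℝ)/4)^ℓ = 3^ℓ/4^ℓ := by rw [div_pow]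
        have e4 : ((1:ℝ)/2)^ℓ * 4^ℓ = 2^ℓ := by
          rw [← mul_pow]; norm_num
        rw [e2, le_div_iff₀ (by positivity)]
        calc (ℓ:ℝ)^2 * (1/2)^ℓ * 4^ℓ = (ℓ:ℝ)^2 * 2^ℓ := by
              rw [mul_assoc, e4]
          _ ≤ 3^ℓ := hr
      calc ((ℓ:ℝ) * Real.logb 2 ℓ + 2) * centralBinom (n-ℓ)
          ≤ (2*(ℓ:ℝ)^2 + 2) * (2 * (1/2)^ℓ * centralBinom n) :=
            mul_le_mul hc1 hcB (cB_nonneg _) (by linarith)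
        _ = ((4*(ℓ:ℝ)^2) * (1/2)^ℓ + 4*(1/2)^ℓ) * centralBinom n := by ring
        _ ≤ (4*(3/4:ℝ)^ℓ + 4*(1/2:ℝ)^ℓ) * centralBinom n := by
            apply mul_le_mul_of_nonneg_right _ (cB_nonneg n)
            nlinarith [hsq]
    have g1 := geom_Ioc_le (3/4) (by norm_num) (by norm_num) 23 M h23M
    have g2 := geom_Ioc_le (1/2) (by norm_num) (by norm_num) 23 M h23M
    have split : ∑ ℓ ∈ Finset.Ioc 23 M, (4*(3/4:ℝ)^ℓ + 4*(1/2:ℝ)^ℓ) * centralBinom n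
        = (4 * (∑ ℓ ∈ Finset.Ioc 23 M, (3/4:ℝ)^ℓ) + 4 * (∑ ℓ ∈ Finset.Ioc 23 M, (1/2:ℝ)^ℓ))
          * centralBinom n := by
      rw [← Finset.sum_mul]
      congr 1
      rw [Finset.mul_sum, Finset.mul_sum, ← Finset.sum_add_distrib]
    calc (∑ ℓ ∈ Finset.Ioc 23 M,
        ((ℓ : ℝ) * Real.logb 2 ℓ * centralBinom (n - ℓ) + 2 * centralBinom (n - ℓ)))
        ≤ ∑ ℓ ∈ Finset.Ioc 23 M, (4*(3/4:ℝ)^ℓ + 4*(1/2:ℝ)^ℓ) * centralBinom n := step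
      _ = (4 * (∑ ℓ ∈ Finset.Ioc 23 M, (3/4:ℝ)^ℓ) + 4 * (∑ ℓ ∈ Finset.Ioc 23 M, (1/2:ℝ)^ℓ))
          * centralBinom n := split
      _ ≤ 0.0161 * centralBinom n := by
        apply mul_le_mul_of_nonneg_right _ (cB_nonneg n)
        have e1 : ((3/4:ℝ))^(23+1) / (1 - 3/4) ≤ 0.01606 := by norm_num
        have e2 : ((1/2:ℝ))^(23+1) / (1 - 1/2) ≤ 0.0000002 := by norm_num
        nlinarith [g1, g2]
  -- block 3 (tail)
  have hB3 : (∑ ℓ ∈ Finset.Ioc M n,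
      ((ℓ : ℝ) * Real.logb 2 ℓ * centralBinom (n - ℓ) + 2 * centralBinom (n - ℓ)))
      ≤ (1/800) * centralBinom n := by
    set c : ℝ := (2*(n:ℝ)^2 + 2) * ((n:ℝ) + 1) with hc
    have hcpos : 0 < c := by positivity
    have step : (∑ ℓ ∈ Finset.Ioc M n,
        ((ℓ : ℝ) * Real.logb 2 ℓ * centralBinom (n - ℓ) + 2 * centralBinom (n - ℓ)))
        ≤ ∑ ℓ ∈ Finset.Ioc M n, (c * centralBinom n) * (1/2:ℝ)^ℓ := by
      apply Finset.sum_le_sum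
      intro ℓ hℓ
      rw [Finset.mem_Ioc] at hℓ
      obtain ⟨hMl, hln⟩ := hℓ
      have hl1 : 1 ≤ ℓ := by omega
      have hlog2 := logb_le_two_mul ℓ hl1
      have hlognn : 0 ≤ Real.logb 2 (ℓ:ℝ) :=
        Real.logb_nonneg one_lt_two (by exact_mod_cast hl1)
      have hlrn : (ℓ:ℝ) ≤ n := by exact_mod_cast hln
      have hlr0 : (0:ℝ) ≤ ℓ := by positivity
      have hcB : centralBinom (n - ℓ) ≤ ((n:ℝ)+1) * (1/2)^ℓ * centralBinom n := by
        apply cB_le ℓ n hln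
        nlinarith
      have hterm : (ℓ:ℝ) * Real.logb 2 ℓ * centralBinom (n-ℓ) + 2 * centralBinom (n-ℓ)
          = ((ℓ:ℝ) * Real.logb 2 ℓ + 2) * centralBinom (n-ℓ) := by ring
      rw [hterm]
      have hc1 : (ℓ:ℝ) * Real.logb 2 ℓ + 2 ≤ 2*(n:ℝ)^2 + 2 := by
        have h1 : (ℓ:ℝ) * Real.logb 2 ℓ ≤ (ℓ:ℝ) * (2*ℓ) :=
          mul_le_mul_of_nonneg_left hlog2 hlr0
        nlinarith
      have hc0 : 0 ≤ (ℓ:ℝ) * Real.logb 2 ℓ + 2 := by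
        have := mul_nonneg hlr0 hlognn
        linarith
      calc ((ℓ:ℝ) * Real.logb 2 ℓ + 2) * centralBinom (n-ℓ)
          ≤ (2*(n:ℝ)^2 + 2) * (((n:ℝ)+1) * (1/2)^ℓ * centralBinom n) :=
            mul_le_mul hc1 hcB (cB_nonneg _) (by linarith)
        _ = (c * centralBinom n) * (1/2:ℝ)^ℓ := by rw [hc]; ring
    have geo := geom_Ioc_le (1/2) (by norm_num) (by norm_num) M n hMn
    have key : 800 * ((2*n^2 + 2) * (n + 1)) ≤ 2 ^ M := by
      have hp := poly_le_exp M hM50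
      have hn2 : n ≤ 2*M + 1 := by omega
      have k1 : 2*n^2 + 2 ≤ 8*(M+1)^2 := by nlinarith
      have k2 : n + 1 ≤ 2*(M+1) := by omega
      calc 800 * ((2*n^2 + 2) * (n + 1)) ≤ 800 * (8*(M+1)^2 * (2*(M+1))) := by
            exact Nat.mul_le_mul_left _ (Nat.mul_le_mul k1 k2)
        _ = 12800 * (M+1)^3 := by ring
        _ ≤ 16000 * (M+1)^3 := Nat.mul_le_mul_right _ (by norm_num)
        _ ≤ 2 ^ M := hp
    have keyr : 800 * c ≤ 2 ^ M := by
      have : ((800 * ((2*n^2 + 2) * (n + 1)) : ℕ) : ℝ) ≤ ((2^M : ℕ) : ℝ) := by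
        exact_mod_cast key
      push_cast at this
      rw [hc]
      linarith
    have h2M : (0:ℝ) < 2 ^ M := by positivity
    have hcleM : c * (1/2:ℝ)^M ≤ 1/800 := by
      have e1 : ((1:ℝ)/2)^M = 1/2^M := by rw [div_pow, one_pow]
      rw [e1]
      rw [mul_one_div, div_le_div_iff₀ h2M (by norm_num)]
      linarith
    calc (∑ ℓ ∈ Finset.Ioc M n,
        ((ℓ : ℝ) * Real.logb 2 ℓ * centralBinom (n - ℓ) + 2 * centralBinom (n - ℓ)))
        ≤ ∑ ℓ ∈ Finset.Ioc M n, (c * centralBinom n) * (1/2:ℝ)^ℓ := step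
      _ = (c * centralBinom n) * ∑ ℓ ∈ Finset.Ioc M n, (1/2:ℝ)^ℓ := by
          rw [Finset.mul_sum]
      _ ≤ (c * centralBinom n) * ((1/2:ℝ)^(M+1) / (1 - 1/2)) := by
          apply mul_le_mul_of_nonneg_left geo
          exact mul_nonneg (le_of_lt hcpos) (cB_nonneg n)
      _ = (c * (1/2:ℝ)^M) * centralBinom n := by
          rw [pow_succ]; ring
      _ ≤ (1/800) * centralBinom n := mul_le_mul_of_nonneg_right hcleM (cB_nonneg n)
  have hfin : ((0.1973 : ℝ) + 0.742 + 0.0161 + 1/800) * centralBinom n < centralBinom n := by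
    nlinarith [hCn]
  have hexp : ((0.1973 : ℝ) + 0.742 + 0.0161 + 1/800) * centralBinom n
      = 0.1973 * centralBinom n + 0.742 * centralBinom n + 0.0161 * centralBinom n
        + (1/800) * centralBinom n := by ring
  rw [hexp] at hfin
  push_cast at hHead' ⊢
  linarith [hHead', hB1, hB2, hB3, hfin]
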